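/- Let n ≥ 1 and M ≥ n be integers. Let P : Fin n → ℝ be an antitone quantum distribution with P(i) = p(i)/M, p(i) positive integers summing to M, and let U : Fin n → ℝ assign U(i) = 1/M for i < n−1 and U(n−1) = (M−n+1)/M. Assume P ≠ U. Then for every quantum distribution Q : Fin n → ℝ with the same quantum (Q(i) = q(i)/M, q(i) positive integers summing to M), the normalized entropic divergence KN(P‖Q) = KL(P‖Q) / KL(P‖U) satisfies 0 ≤ KN(P‖Q) ≤ 1. -/

import Mathlib

/-- Kullback–Leibler divergence (base-2 logarithm) between two finite distributions. -/
noncomputable def KL {n : ℕ} (P Q : Fin n → ℝ) : ℝ :=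
  ∑ i, P i * Real.logb 2 (P i / Q i)

/-- Gibbs' inequality, nonstrict form. -/
lemma gibbs_nonneg {n : ℕ} (P Q : Fin n → ℝ) (hP : ∀ i, 0 < P i) (hQ : ∀ i, 0 < Q i)
    (hsum : ∑ i, Q i ≤ ∑ i, P i) :
    0 ≤ ∑ i, P i * Real.log (P i / Q i) := by
  have h : ∑ i, P i * Real.log (Q i / P i) ≤ ∑ i, (Q i - P i) := by
    apply Finset.sum_le_sum
    intro i _
    have hlog := Real.log_le_sub_one_of_pos (div_pos (hQ i) (hP i))
    have := mul_le_mul_of_nonneg_left hlog (hP i).le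
    calc P i * Real.log (Q i / P i) ≤ P i * (Q i / P i - 1) := this
      _ = Q i - P i := by
        rw [mul_sub, mul_one, mul_div_cancel₀ _ (hP i).ne']
  have h2 : ∑ i, (Q i - P i) ≤ 0 := by
    rw [Finset.sum_sub_distrib]; linarith
  have h3 : ∑ i, P i * Real.log (P i / Q i) = -∑ i, P i * Real.log (Q i / P i) := by
    rw [← Finset.sum_neg_distrib]
    apply Finset.sum_congr rfl
    intro i _
    rw [← mul_neg, ← Real.log_inv, inv_div]
  linarith

/-- Gibbs' inequality, strict form. -/
lemma gibbs_pos {n : ℕ} (P Q : Fin n → ℝ) (hP : ∀ i, 0 < P i) (hQ : ∀ i, 0 < Q i)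
    (hsum : ∑ i, Q i ≤ ∑ i, P i) (i₀ : Fin n) (hne : P i₀ ≠ Q i₀) :
    0 < ∑ i, P i * Real.log (P i / Q i) := by
  have h : ∑ i, P i * Real.log (Q i / P i) < ∑ i, (Q i - P i) := by
    apply Finset.sum_lt_sum
    · intro i _
      have hlog := Real.log_le_sub_one_of_pos (div_pos (hQ i) (hP i))
      have := mul_le_mul_of_nonneg_left hlog (hP i).le
      calc P i * Real.log (Q i / P i) ≤ P i * (Q i / P i - 1) := this
        _ = Q i - P i := by
          rw [mul_sub, mul_one, mul_div_cancel₀ _ (hP i).ne']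
    · refine ⟨i₀, Finset.mem_univ _, ?_⟩
      have hne1 : Q i₀ / P i₀ ≠ 1 := fun h1 =>
        hne ((div_eq_one_iff_eq (hP i₀).ne').mp h1).symm
      have hlog := Real.log_lt_sub_one_of_pos (div_pos (hQ i₀) (hP i₀)) hne1
      have := mul_lt_mul_of_pos_left hlog (hP i₀)
      calc P i₀ * Real.log (Q i₀ / P i₀) < P i₀ * (Q i₀ / P i₀ - 1) := this
        _ = Q i₀ - P i₀ := by
          rw [mul_sub, mul_one, mul_div_cancel₀ _ (hP i₀).ne']
  have h2 : ∑ i, (Q i - P i) ≤ 0 := by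
    rw [Finset.sum_sub_distrib]; linarith
  have h3 : ∑ i, P i * Real.log (P i / Q i) = -∑ i, P i * Real.log (Q i / P i) := by
    rw [← Finset.sum_neg_distrib]
    apply Finset.sum_congr rfl
    intro i _
    rw [← mul_neg, ← Real.log_inv, inv_div]
  linarith

/-- Product of positive naturals is at least sum minus (card - 1). -/
lemma prod_ge_sum_aux {ι : Type*} [DecidableEq ι] (s : Finset ι) (q : ι → ℕ)
    (hq : ∀ i ∈ s, 1 ≤ q i) :
    ∑ i ∈ s, q i + 1 ≤ ∏ i ∈ s, q i + s.card := by
  induction s using Finset.induction_on with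
  | empty => simp
  | @insert a s ha ih =>
    rw [Finset.sum_insert ha, Finset.prod_insert ha, Finset.card_insert_of_notMem ha]
    have h1 : 1 ≤ q a := hq a (Finset.mem_insert_self a s)
    have h2 : ∀ i ∈ s, 1 ≤ q i := fun i hi => hq i (Finset.mem_insert_of_mem hi)
    have ih' := ih h2
    have hprod : 1 ≤ ∏ i ∈ s, q i := Finset.one_le_prod' h2
    nlinarith [Nat.mul_le_mul_left (q a) hprod]

/-- The normalized entropic divergence `KN(P‖Q) = KL(P‖Q) / KL(P‖U)`, where `U` is the
maximizing quantum distribution, lies in the interval `[0, 1]`. -/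
theorem normalized_kl_mem_unit_interval (n M : ℕ) (hn : 1 ≤ n) (hM : n ≤ M)
    (p : Fin n → ℕ) (hp : ∀ i, 0 < p i) (hpsum : ∑ i, p i = M)
    (P : Fin n → ℝ) (hP : ∀ i, P i = (p i : ℝ) / (M : ℝ))
    (hanti : Antitone P)
    (U : Fin n → ℝ)
    (hU1 : ∀ i : Fin n, (i : ℕ) < n - 1 → U i = 1 / (M : ℝ))
    (hU2 : U ⟨n - 1, by omega⟩ = ((M : ℝ) - (n : ℝ) + 1) / (M : ℝ))
    (hPU : P ≠ U)
    (q : Fin n → ℕ) (hq : ∀ i, 0 < q i) (hqsum : ∑ i, q i = M)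
    (Q : Fin n → ℝ) (hQ : ∀ i, Q i = (q i : ℝ) / (M : ℝ)) :
    0 ≤ KL P Q / KL P U ∧ KL P Q / KL P U ≤ 1 := by
  have hM0 : 0 < M := lt_of_lt_of_le hn hM
  have hMR : (0 : ℝ) < (M : ℝ) := by exact_mod_cast hM0
  set last : Fin n := ⟨n - 1, by omega⟩ with hlast
  have hPpos : ∀ i, 0 < P i := fun i => by
    rw [hP]; exact div_pos (by exact_mod_cast hp i) hMR
  have hQpos : ∀ i, 0 < Q i := fun i => by
    rw [hQ]; exact div_pos (by exact_mod_cast hq i) hMR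
  have hMn1 : (0 : ℝ) < (M : ℝ) - (n : ℝ) + 1 := by
    have : (n : ℝ) ≤ (M : ℝ) := by exact_mod_cast hM
    linarith
  have hUpos : ∀ i, 0 < U i := by
    intro i
    by_cases h : (i : ℕ) < n - 1
    · rw [hU1 i h]; exact div_pos one_pos hMR
    · have : i = last := by
        apply Fin.ext
        simp only [hlast]
        omega
      rw [this, hU2]; exact div_pos hMn1 hMR
  have hPsum : ∑ i, P i = 1 := by
    simp only [hP]
    rw [← Finset.sum_div]
    rw [show ∑ i, (p i : ℝ) = (M : ℝ) by exact_mod_cast congrArg Nat.cast hpsum]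
    field_simp
  have hQsum : ∑ i, Q i = 1 := by
    simp only [hQ]
    rw [← Finset.sum_div]
    rw [show ∑ i, (q i : ℝ) = (M : ℝ) by exact_mod_cast congrArg Nat.cast hqsum]
    field_simp
  have hUsum : ∑ i, U i = 1 := by
    rw [← Finset.sum_erase_add _ _ (Finset.mem_univ last)]
    have herase : ∀ i ∈ Finset.univ.erase last, U i = 1 / (M : ℝ) := by
      intro i hi
      apply hU1
      have hne := Finset.ne_of_mem_erase hi
      have : (i : ℕ) ≠ n - 1 := fun h => hne (Fin.ext h)
      omega
    rw [Finset.sum_congr rfl herase, Finset.sum_const,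
      Finset.card_erase_of_mem (Finset.mem_univ last), Finset.card_univ, Fintype.card_fin,
      hU2, nsmul_eq_mul]
    have hcast : ((n - 1 : ℕ) : ℝ) = (n : ℝ) - 1 := by
      have h1 : (1 : ℕ) ≤ n := hn
      push_cast [Nat.cast_sub h1]
      ring
    rw [hcast]
    field_simp
    ring
  -- KL as log-sum divided by log 2
  have hlog2 : (0 : ℝ) < Real.log 2 := Real.log_pos (by norm_num)
  have hKL : ∀ R : Fin n → ℝ, KL P R = (∑ i, P i * Real.log (P i / R i)) / Real.log 2 := by
    intro R
    unfold KL
    rw [Finset.sum_div]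
    apply Finset.sum_congr rfl
    intro i _
    rw [Real.logb, mul_div_assoc]
  -- nonnegativity of KL P Q
  have hKLQ : 0 ≤ KL P Q := by
    rw [hKL]
    apply div_nonneg _ hlog2.le
    exact gibbs_nonneg P Q hPpos hQpos (by rw [hPsum, hQsum])
  -- strict positivity of KL P U
  have hKLU : 0 < KL P U := by
    rw [hKL]
    apply div_pos _ hlog2
    obtain ⟨i₀, hi₀⟩ := Function.ne_iff.mp hPU
    exact gibbs_pos P U hPpos hUpos (by rw [hPsum, hUsum]) i₀ hi₀
  -- main inequality : KL P Q ≤ KL P U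
  have hmain : KL P Q ≤ KL P U := by
    rw [hKL, hKL]
    rw [div_le_div_iff_of_pos_right hlog2]
    -- reduce to ∑ P i * (log Q i - log U i) ≥ 0
    have hsplit : ∀ R : Fin n → ℝ, (∀ i, 0 < R i) →
        ∑ i, P i * Real.log (P i / R i) = ∑ i, P i * Real.log (P i) - ∑ i, P i * Real.log (R i) := by
      intro R hR
      rw [← Finset.sum_sub_distrib]
      apply Finset.sum_congr rfl
      intro i _
      rw [Real.log_div (hPpos i).ne' (hR i).ne']
      ring
    rw [hsplit Q hQpos, hsplit U hUpos]
    have key : ∑ i, P i * Real.log (U i) ≤ ∑ i, P i * Real.log (Q i) := by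
      -- compute LHS
      have hLHS : ∑ i, P i * Real.log (U i) =
          -Real.log M + P last * Real.log ((M : ℝ) - (n : ℝ) + 1) := by
        rw [← Finset.sum_erase_add _ _ (Finset.mem_univ last)]
        have herase : ∀ i ∈ Finset.univ.erase last,
            P i * Real.log (U i) = P i * (-Real.log M) := by
          intro i hi
          have hne := Finset.ne_of_mem_erase hi
          have hlt : (i : ℕ) < n - 1 := by
            have : (i : ℕ) ≠ n - 1 := fun h => hne (Fin.ext h)
            omega
          rw [hU1 i hlt, Real.log_div one_ne_zero hMR.ne', Real.log_one]
          ring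
        rw [Finset.sum_congr rfl herase, hU2,
          Real.log_div (by linarith) hMR.ne']
        have hsum_erase : ∑ i ∈ Finset.univ.erase last, P i = 1 - P last := by
          have := Finset.sum_erase_add Finset.univ P (Finset.mem_univ last)
          rw [hPsum] at this
          linarith
        rw [← Finset.sum_mul, hsum_erase]
        ring
      -- rewrite RHS
      have hRHS : ∑ i, P i * Real.log (Q i) =
          -Real.log M + ∑ i, P i * Real.log (q i) := by
        have : ∀ i, P i * Real.log (Q i) = P i * Real.log (q i) + P i * (-Real.log M) := by
          intro i
          rw [hQ, Real.log_div (by exact_mod_cast (hq i).ne') hMR.ne']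
          ring
        simp only [this]
        rw [Finset.sum_add_distrib, ← Finset.sum_mul, hPsum]
        ring
      rw [hLHS, hRHS]
      have hPlast : ∀ i, P last ≤ P i := by
        intro i
        apply hanti
        have : (i : ℕ) ≤ n - 1 := by omega
        exact this
      have hlogq : ∀ i, 0 ≤ Real.log (q i) := by
        intro i
        apply Real.log_nonneg
        exact_mod_cast hq i
      have step1 : P last * ∑ i, Real.log (q i) ≤ ∑ i, P i * Real.log (q i) := by
        rw [Finset.mul_sum]
        apply Finset.sum_le_sum
        intro i _
        exact mul_le_mul_of_nonneg_right (hPlast i) (hlogq i)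
      have step2 : Real.log ((M : ℝ) - (n : ℝ) + 1) ≤ ∑ i, Real.log (q i) := by
        rw [← Real.log_prod (fun i _ => by exact_mod_cast (hq i).ne')]
        apply Real.log_le_log hMn1
        have hnat := prod_ge_sum_aux Finset.univ q (fun i _ => hq i)
        rw [hqsum, Finset.card_univ, Fintype.card_fin] at hnat
        have : ((M : ℝ) + 1) ≤ (∏ i, (q i : ℝ)) + n := by
          rw [← Nat.cast_prod]
          exact_mod_cast hnat
        linarith
      have step3 : P last * Real.log ((M : ℝ) - (n : ℝ) + 1) ≤
          P last * ∑ i, Real.log (q i) :=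
        mul_le_mul_of_nonneg_left step2 (hPpos last).le
      linarith
    linarith
  exact ⟨div_nonneg hKLQ hKLU.le, (div_le_one hKLU).mpr hmain⟩
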